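/- For fixed y ∈ (0,1) and ξ > 0, define G₀(t,y) = (1/(2√π t^{3/2})) Σ_{n ∈ ℤ} (y+2n) e^{-(y+2n)²/(4t)}. Then ∫₀^ξ G₀(t,y) dt = (2/√π) Σ_{n=0}^∞ ∫_{(y+2n)/(2√ξ)}^{(2n+2−y)/(2√ξ)} e^{-t²} dt. -/

import Mathlib

open Real MeasureTheory intervalIntegral Set Filter Topology

noncomputable def phi (x : ℝ) : ℝ := ∫ s in (0:ℝ)..x, Real.exp (-s ^ 2)

noncomputable def core (a t : ℝ) : ℝ :=
  a * Real.exp (-a ^ 2 / (4 * t)) / (2 * t ^ ((3:ℝ)/2))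

lemma continuous_gauss : Continuous fun s : ℝ => Real.exp (-s ^ 2) := by
  continuity

lemma phi_hasDerivAt (x : ℝ) : HasDerivAt phi (Real.exp (-x ^ 2)) x :=
  (continuous_gauss.integral_hasStrictDerivAt 0 x).hasDerivAt

lemma phi_nonneg {x : ℝ} (hx : 0 ≤ x) : 0 ≤ phi x := by
  apply intervalIntegral.integral_nonneg hx
  intro s _; positivity

lemma phi_neg (x : ℝ) : phi (-x) = - phi x := by
  unfold phi
  have h : ∀ s : ℝ, Real.exp (-s ^ 2) = Real.exp (-(-s) ^ 2) := by intro s; ring_nf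
  calc ∫ s in (0:ℝ)..(-x), Real.exp (-s ^ 2)
      = ∫ s in (0:ℝ)..(-x), Real.exp (-(-s) ^ 2) := by simp_rw [← h]
    _ = ∫ s in x..(0:ℝ), Real.exp (-s ^ 2) := by
        have h2 := intervalIntegral.integral_comp_neg (fun s => Real.exp (-s ^ 2))
          (a := (0:ℝ)) (b := -x)
        rw [h2, neg_neg, neg_zero]
    _ = - ∫ s in (0:ℝ)..x, Real.exp (-s ^ 2) := by rw [intervalIntegral.integral_symm]

lemma phi_sub (p q : ℝ) : phi q - phi p = ∫ s in p..q, Real.exp (-s ^ 2) := by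
  unfold phi
  rw [intervalIntegral.integral_interval_sub_left (continuous_gauss.intervalIntegrable _ _)
    (continuous_gauss.intervalIntegrable _ _)]

lemma phi_tendsto : Tendsto phi atTop (𝓝 (Real.sqrt π / 2)) := by
  have h1 : IntegrableOn (fun s : ℝ => Real.exp (-s ^ 2)) (Ioi 0) := by
    have := (integrable_exp_neg_mul_sq (b := 1) one_pos).integrableOn (s := Ioi (0:ℝ))
    simpa using this
  have := intervalIntegral_tendsto_integral_Ioi 0 h1 (tendsto_id (x := atTop))
  have h2 : ∫ x in Ioi (0:ℝ), Real.exp (-x ^ 2) = Real.sqrt π / 2 := by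
    have := integral_gaussian_Ioi 1
    simpa using this
  rw [h2] at this
  exact this

lemma rpow_three_halves {t : ℝ} (ht : 0 < t) : t ^ ((3:ℝ)/2) = t * Real.sqrt t := by
  rw [show ((3:ℝ)/2) = 1 + 1/2 by norm_num, Real.rpow_add ht, Real.rpow_one,
    ← Real.sqrt_eq_rpow]

lemma core_zero (a : ℝ) : core a 0 = 0 := by
  unfold core
  rw [Real.zero_rpow (by norm_num)]
  simp

lemma core_neg (a t : ℝ) : core (-a) t = - core a t := by
  unfold core
  rw [show (-a : ℝ) ^ 2 = a ^ 2 from neg_sq a]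
  ring

lemma core_nonneg {a : ℝ} (ha : 0 ≤ a) (t : ℝ) (ht : 0 ≤ t) : 0 ≤ core a t := by
  unfold core
  have : (0:ℝ) ≤ t ^ ((3:ℝ)/2) := Real.rpow_nonneg ht _
  positivity

lemma core_abs (a : ℝ) {t : ℝ} (ht : 0 ≤ t) : |core a t| = core |a| t := by
  unfold core
  rw [sq_abs, abs_div, abs_mul, abs_of_pos (Real.exp_pos _),
    abs_of_nonneg (by positivity : (0:ℝ) ≤ 2 * t ^ ((3:ℝ)/2))]

lemma F_hasDerivAt (a : ℝ) {t : ℝ} (ht : 0 < t) :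
    HasDerivAt (fun u => -2 * phi (a / (2 * Real.sqrt u))) (core a t) t := by
  have hs : (0:ℝ) < Real.sqrt t := Real.sqrt_pos.mpr ht
  have h1 : HasDerivAt (fun u : ℝ => 2 * Real.sqrt u) (2 * (1 / (2 * Real.sqrt t))) t :=
    (Real.hasDerivAt_sqrt ht.ne').const_mul 2
  have h2 : HasDerivAt (fun u : ℝ => a / (2 * Real.sqrt u))
      ((0 * (2 * Real.sqrt t) - a * (2 * (1 / (2 * Real.sqrt t)))) / (2 * Real.sqrt t) ^ 2) t :=
    (hasDerivAt_const t a).div h1 (by positivity)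
  have h3 := (phi_hasDerivAt (a / (2 * Real.sqrt t))).comp t h2
  have h4 := HasDerivAt.const_mul (-2 : ℝ) h3
  refine h4.congr_deriv ?_
  unfold core
  have hsq : (2 * Real.sqrt t) ^ 2 = 4 * t := by
    rw [mul_pow, Real.sq_sqrt ht.le]; ring
  have hdiv : (a / (2 * Real.sqrt t)) ^ 2 = a ^ 2 / (4 * t) := by
    rw [div_pow, hsq]
  rw [rpow_three_halves ht, hdiv, hsq, neg_div]
  field_simp
  ring

lemma exp_neg_le_inv {u : ℝ} (hu : 0 < u) : Real.exp (-u) ≤ u⁻¹ := by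
  rw [Real.exp_neg]
  apply inv_anti₀ hu
  linarith [Real.add_one_le_exp u]

lemma core_measurable (a : ℝ) : Measurable (core a) := by
  unfold core
  fun_prop

lemma core_intervalIntegrable {a ξ : ℝ} (ha : a ≠ 0) (hξ : 0 < ξ) :
    IntervalIntegrable (core a) volume 0 ξ := by
  rw [intervalIntegrable_iff_integrableOn_Ioc_of_le hξ.le]
  refine Measure.integrableOn_of_bounded (μ := volume) (s := Ioc 0 ξ) (f := core a)
    (M := 32 * Real.sqrt ξ / |a| ^ 3) measure_Ioc_lt_top.ne
    ((core_measurable a).aestronglyMeasurable) ?_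
  rw [ae_restrict_iff' measurableSet_Ioc]
  filter_upwards with t ht
  obtain ⟨ht0, htξ⟩ := ht
  have hs : (0:ℝ) < Real.sqrt t := Real.sqrt_pos.mpr ht0
  have ha2 : (0:ℝ) < a ^ 2 := by positivity
  -- exp bound
  have e1 : Real.exp (-(a ^ 2) / (4 * t)) ≤ 64 * t ^ 2 / a ^ 4 := by
    have h8 : Real.exp (-(a ^ 2 / (8 * t))) ≤ (a ^ 2 / (8 * t))⁻¹ :=
      exp_neg_le_inv (by positivity)
    have hsplit : Real.exp (-(a ^ 2) / (4 * t)) =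
        Real.exp (-(a ^ 2 / (8 * t))) * Real.exp (-(a ^ 2 / (8 * t))) := by
      rw [← Real.exp_add]; ring_nf
    rw [hsplit]
    have hpos : (0:ℝ) ≤ Real.exp (-(a ^ 2 / (8 * t))) := (Real.exp_pos _).le
    calc Real.exp (-(a ^ 2 / (8 * t))) * Real.exp (-(a ^ 2 / (8 * t)))
        ≤ (a ^ 2 / (8 * t))⁻¹ * (a ^ 2 / (8 * t))⁻¹ :=
          mul_le_mul h8 h8 hpos (le_trans hpos h8)
      _ = 64 * t ^ 2 / a ^ 4 := by field_simp; ring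
  have hnorm : ‖core a t‖ = |a| * Real.exp (-(a ^ 2) / (4 * t)) / (2 * (t * Real.sqrt t)) := by
    rw [Real.norm_eq_abs, core_abs a ht0.le]
    unfold core
    rw [rpow_three_halves ht0, sq_abs]
  rw [hnorm]
  have hst : Real.sqrt t ≤ Real.sqrt ξ := Real.sqrt_le_sqrt htξ
  have h1 : |a| * Real.exp (-(a ^ 2) / (4 * t)) / (2 * (t * Real.sqrt t))
      ≤ |a| * (64 * t ^ 2 / a ^ 4) / (2 * (t * Real.sqrt t)) := by
    gcongr
  refine h1.trans ?_
  rw [div_le_div_iff₀ (by positivity) (by positivity)]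
  have habs : |a| ^ 4 = a ^ 4 := by
    rw [← abs_pow]; exact abs_of_nonneg (by positivity)
  have hmm : Real.sqrt t * Real.sqrt t = t := Real.mul_self_sqrt ht0.le
  have h3 : t ≤ Real.sqrt ξ * Real.sqrt t := by nlinarith
  have h4 : |a| * (64 * t ^ 2 / a ^ 4) * |a| ^ 3 = 64 * t ^ 2 := by
    field_simp
    linear_combination habs
  rw [h4]
  nlinarith [ht0.le, hs.le]

lemma core_integral {a ξ : ℝ} (ha : 0 < a) (hξ : 0 < ξ) :
    ∫ t in (0:ℝ)..ξ, core a t = Real.sqrt π - 2 * phi (a / (2 * Real.sqrt ξ)) := by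
  have hint := core_intervalIntegrable ha.ne' hξ
  have hderiv : ∀ t ∈ Ioo (0:ℝ) ξ,
      HasDerivAt (fun u => -2 * phi (a / (2 * Real.sqrt u))) (core a t) t :=
    fun t ht => F_hasDerivAt a ht.1
  -- limit at 0⁺
  have t1 : Tendsto (fun u : ℝ => 2 * Real.sqrt u) (𝓝[>] 0) (𝓝[>] 0) := by
    apply tendsto_nhdsWithin_of_tendsto_nhds_of_eventually_within
    · have : Tendsto (fun u : ℝ => 2 * Real.sqrt u) (𝓝 0) (𝓝 (2 * Real.sqrt 0)) :=
        (continuous_const.mul Real.continuous_sqrt).tendsto 0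
      simpa using this.mono_left nhdsWithin_le_nhds
    · filter_upwards [self_mem_nhdsWithin] with u hu
      have : (0:ℝ) < u := hu
      have : (0:ℝ) < Real.sqrt u := Real.sqrt_pos.mpr this
      exact mem_Ioi.mpr (by positivity)
  have t2 : Tendsto (fun u : ℝ => a / (2 * Real.sqrt u)) (𝓝[>] 0) atTop := by
    have hinv : Tendsto (fun u : ℝ => (2 * Real.sqrt u)⁻¹) (𝓝[>] 0) atTop :=
      tendsto_inv_nhdsGT_zero.comp t1
    have := hinv.const_mul_atTop ha
    simpa [div_eq_mul_inv] using this
  have h0 : Tendsto (fun u : ℝ => -2 * phi (a / (2 * Real.sqrt u))) (𝓝[>] (0:ℝ))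
      (𝓝 (-Real.sqrt π)) := by
    have := (phi_tendsto.comp t2).const_mul (-2 : ℝ)
    have heq : (-2 : ℝ) * (Real.sqrt π / 2) = -Real.sqrt π := by ring
    rw [heq] at this
    exact this
  have hc : ContinuousAt (fun u : ℝ => -2 * phi (a / (2 * Real.sqrt u))) ξ := by
    have hphi : Continuous phi := by
      apply continuous_iff_continuousAt.mpr
      exact fun x => (phi_hasDerivAt x).continuousAt
    have hsξ : (2 : ℝ) * Real.sqrt ξ ≠ 0 := by
      have := Real.sqrt_pos.mpr hξ; positivity
    have hg : ContinuousAt (fun u : ℝ => a / (2 * Real.sqrt u)) ξ :=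
      (continuousAt_const.div ((continuous_const.mul Real.continuous_sqrt).continuousAt) hsξ)
    exact (continuousAt_const.mul (hphi.continuousAt.comp hg))
  have hb : Tendsto (fun u : ℝ => -2 * phi (a / (2 * Real.sqrt u))) (𝓝[<] ξ)
      (𝓝 (-2 * phi (a / (2 * Real.sqrt ξ)))) :=
    (hc.tendsto).mono_left nhdsWithin_le_nhds
  have := intervalIntegral.integral_eq_sub_of_hasDerivAt_of_tendsto hξ hderiv hint h0 hb
  rw [this]; ring

lemma core_integral_neg {a ξ : ℝ} (ha : a < 0) (hξ : 0 < ξ) :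
    ∫ t in (0:ℝ)..ξ, core a t = -Real.sqrt π - 2 * phi (a / (2 * Real.sqrt ξ)) := by
  have h := core_integral (a := -a) (by linarith) hξ
  have heq : ∀ t, core a t = -(core (-a) t) := by
    intro t; rw [core_neg, neg_neg]
  calc ∫ t in (0:ℝ)..ξ, core a t = ∫ t in (0:ℝ)..ξ, -(core (-a) t) := by
        simp_rw [heq]
    _ = -∫ t in (0:ℝ)..ξ, core (-a) t := intervalIntegral.integral_neg
    _ = -(Real.sqrt π - 2 * phi (-a / (2 * Real.sqrt ξ))) := by rw [h]
    _ = -Real.sqrt π - 2 * phi (a / (2 * Real.sqrt ξ)) := by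
        rw [show -a / (2 * Real.sqrt ξ) = -(a / (2 * Real.sqrt ξ)) by ring, phi_neg]
        ring

lemma core_pointwise_bound {a ξ : ℝ} (ha : 0 < a) (hξ : 0 < ξ) {t : ℝ}
    (ht : t ∈ Icc (0:ℝ) ξ) :
    core a t ≤ Real.sqrt 2 * Real.exp (-a ^ 2 / (8 * ξ)) * core (a / Real.sqrt 2) t := by
  rcases eq_or_lt_of_le ht.1 with h0 | h0
  · rw [← h0, core_zero, core_zero, mul_zero]
  · have htξ := ht.2
    have hs2 : (0:ℝ) < Real.sqrt 2 := by positivity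
    have hkey : core a t = Real.sqrt 2 * Real.exp (-a ^ 2 / (8 * t)) * core (a / Real.sqrt 2) t := by
      unfold core
      have h2 : (a / Real.sqrt 2) ^ 2 = a ^ 2 / 2 := by
        rw [div_pow, Real.sq_sqrt (by norm_num : (2:ℝ) ≥ 0)]
      rw [h2]
      have hexp : Real.exp (-a ^ 2 / (4 * t)) =
          Real.exp (-a ^ 2 / (8 * t)) * Real.exp (-(a ^ 2 / 2) / (4 * t)) := by
        rw [← Real.exp_add]; congr 1; field_simp; ring
      rw [hexp]
      field_simp
    rw [hkey]
    have hmono : Real.exp (-a ^ 2 / (8 * t)) ≤ Real.exp (-a ^ 2 / (8 * ξ)) := by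
      apply Real.exp_le_exp.mpr
      rw [neg_div, neg_div, neg_le_neg_iff]
      apply div_le_div_of_nonneg_left (by positivity) (by positivity)
      nlinarith
    have hcnn : 0 ≤ core (a / Real.sqrt 2) t := core_nonneg (by positivity) t ht.1
    have := mul_le_mul_of_nonneg_right
      (mul_le_mul_of_nonneg_left hmono hs2.le) hcnn
    exact this

lemma core_integral_le {a ξ : ℝ} (ha : 0 < a) (hξ : 0 < ξ) :
    ∫ t in (0:ℝ)..ξ, core a t ≤ Real.sqrt 2 * Real.sqrt π * Real.exp (-a ^ 2 / (8 * ξ)) := by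
  have hb : (0:ℝ) < a / Real.sqrt 2 := by positivity
  have hint := core_intervalIntegrable ha.ne' hξ
  have hintb := core_intervalIntegrable hb.ne' hξ
  have h1 : ∫ t in (0:ℝ)..ξ, core a t ≤
      ∫ t in (0:ℝ)..ξ, Real.sqrt 2 * Real.exp (-a ^ 2 / (8 * ξ)) * core (a / Real.sqrt 2) t := by
    apply intervalIntegral.integral_mono_on hξ.le hint (hintb.const_mul _)
    exact fun t ht => core_pointwise_bound ha hξ ht
  have h2 : ∫ t in (0:ℝ)..ξ, Real.sqrt 2 * Real.exp (-a ^ 2 / (8 * ξ)) * core (a / Real.sqrt 2) t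
      = Real.sqrt 2 * Real.exp (-a ^ 2 / (8 * ξ)) *
        (Real.sqrt π - 2 * phi (a / Real.sqrt 2 / (2 * Real.sqrt ξ))) := by
    rw [intervalIntegral.integral_const_mul, core_integral hb hξ]
  have h3 : Real.sqrt π - 2 * phi (a / Real.sqrt 2 / (2 * Real.sqrt ξ)) ≤ Real.sqrt π := by
    have : 0 ≤ phi (a / Real.sqrt 2 / (2 * Real.sqrt ξ)) := by
      apply phi_nonneg
      have := Real.sqrt_pos.mpr hξ
      positivity
    linarith
  calc ∫ t in (0:ℝ)..ξ, core a t
      ≤ Real.sqrt 2 * Real.exp (-a ^ 2 / (8 * ξ)) *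
        (Real.sqrt π - 2 * phi (a / Real.sqrt 2 / (2 * Real.sqrt ξ))) := by rw [← h2]; exact h1
    _ ≤ Real.sqrt 2 * Real.exp (-a ^ 2 / (8 * ξ)) * Real.sqrt π := by
        apply mul_le_mul_of_nonneg_left h3 (by positivity)
    _ = Real.sqrt 2 * Real.sqrt π * Real.exp (-a ^ 2 / (8 * ξ)) := by ring

lemma summable_gauss_aux {ξ : ℝ} (hξ : 0 < ξ) (w : ℕ → ℝ)
    (hw : ∀ n : ℕ, (n:ℝ) ≤ |w n|) :
    Summable (fun n : ℕ => Real.sqrt 2 * Real.exp (-(w n) ^ 2 / (8 * ξ))) := by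
  have hr0 : (0:ℝ) ≤ Real.exp (-(8 * ξ)⁻¹) := (Real.exp_pos _).le
  have hr1 : Real.exp (-(8 * ξ)⁻¹) < 1 := Real.exp_lt_one_iff.mpr (neg_lt_zero.mpr (by positivity))
  apply Summable.of_nonneg_of_le (fun n => by positivity) (fun n => ?_)
    ((summable_geometric_of_lt_one hr0 hr1).mul_left (Real.sqrt 2))
  have hpow : Real.exp (-(8 * ξ)⁻¹) ^ n = Real.exp (n * (-(8 * ξ)⁻¹)) :=
    (Real.exp_nat_mul _ n).symm
  rw [hpow]
  apply mul_le_mul_of_nonneg_left _ (by positivity)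
  apply Real.exp_le_exp.mpr
  have h1 : (n:ℝ) ^ 2 ≤ (w n) ^ 2 := by
    have h2 : ((n:ℝ)) ^ 2 ≤ |w n| ^ 2 := by
      apply pow_le_pow_left₀ (by positivity) (hw n)
    rwa [sq_abs] at h2
  have hn2 : (n:ℝ) ≤ (n:ℝ) ^ 2 := by
    exact_mod_cast Nat.le_self_pow two_ne_zero n
  rw [neg_div, mul_neg, neg_le_neg_iff, div_eq_mul_inv]
  exact mul_le_mul_of_nonneg_right (hn2.trans h1) (by positivity)

set_option maxHeartbeats 2000000 in
/-- For `y ∈ (0,1)` and `ξ > 0`, with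
`G₀(t,y) = (1/(2√π t^{3/2})) Σ_{n∈ℤ} (y+2n) e^{-(y+2n)²/(4t)}`, one has
`∫₀^ξ G₀(t,y) dt = (2/√π) Σ_{n≥0} ∫_{(y+2n)/(2√ξ)}^{(2n+2−y)/(2√ξ)} e^{-t²} dt`. -/
theorem G0_integral_representation
    (G₀ : ℝ → ℝ → ℝ)
    (hG₀ : ∀ t y : ℝ, 0 < t → G₀ t y =
      (1 / (2 * Real.sqrt Real.pi * t ^ ((3:ℝ)/2))) *
        ∑' n : ℤ, (y + 2 * n) * Real.exp (-(y + 2 * n) ^ 2 / (4 * t)))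
    (y : ℝ) (hy : y ∈ Set.Ioo (0:ℝ) 1) (ξ : ℝ) (hξ : 0 < ξ) :
    ∫ t in (0:ℝ)..ξ, G₀ t y =
      (2 / Real.sqrt Real.pi) *
        ∑' n : ℕ, ∫ t in ((y + 2 * n) / (2 * Real.sqrt ξ))..((2 * n + 2 - y) / (2 * Real.sqrt ξ)),
          Real.exp (-t ^ 2) := by
  obtain ⟨hy0, hy1⟩ := hy
  have hsπ : (0:ℝ) < Real.sqrt π := Real.sqrt_pos.mpr Real.pi_pos
  have hsξ : (0:ℝ) < Real.sqrt ξ := Real.sqrt_pos.mpr hξ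
  set g : ℤ → ℝ → ℝ := fun n t => (Real.sqrt π)⁻¹ * core (y + 2 * n) t with hg
  have hA : ∀ n : ℤ, (y + 2 * (n:ℝ)) ≠ 0 := by
    intro n
    rcases le_or_gt 0 n with h | h
    · have h' : (0:ℝ) ≤ (n:ℝ) := Int.cast_nonneg_iff.mpr h
      exact ne_of_gt (by linarith)
    · have h' : n ≤ -1 := by omega
      have h'' : (n:ℝ) ≤ -1 := by exact_mod_cast h'
      exact ne_of_lt (by linarith)
  have hterm : ∀ (n : ℤ) (t : ℝ),
      (1 / (2 * Real.sqrt Real.pi * t ^ ((3:ℝ)/2))) *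
        ((y + 2 * n) * Real.exp (-(y + 2 * n) ^ 2 / (4 * t))) = g n t := by
    intro n t
    simp only [hg]
    unfold core
    simp only [div_eq_mul_inv, mul_inv, one_mul]
    ring
  -- rewrite the left-hand side
  rw [intervalIntegral.integral_of_le hξ.le]
  have hLHS : ∫ t in Ioc (0:ℝ) ξ, G₀ t y = ∫ t in Ioc (0:ℝ) ξ, ∑' n : ℤ, g n t := by
    apply setIntegral_congr_fun measurableSet_Ioc
    intro t ht
    show G₀ t y = ∑' n : ℤ, g n t
    rw [hG₀ t y ht.1, ← tsum_mul_left]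
    exact tsum_congr fun n => hterm n t
  rw [hLHS]
  -- integrability of each term
  have hint : ∀ n : ℤ, Integrable (g n) (volume.restrict (Ioc (0:ℝ) ξ)) := by
    intro n
    apply Integrable.const_mul
    have h := core_intervalIntegrable (hA n) hξ
    rwa [intervalIntegrable_iff_integrableOn_Ioc_of_le hξ.le] at h
  -- bound on the norm-integrals
  have hnormval : ∀ n : ℤ, ∫ t in Ioc (0:ℝ) ξ, ‖g n t‖ ≤
      Real.sqrt 2 * Real.exp (-(y + 2 * (n:ℝ)) ^ 2 / (8 * ξ)) := by
    intro n
    have h1 : EqOn (fun t => ‖g n t‖)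
        (fun t => (Real.sqrt π)⁻¹ * core |y + 2 * (n:ℝ)| t) (Ioc (0:ℝ) ξ) := by
      intro t ht
      simp only [hg, norm_mul, Real.norm_eq_abs]
      rw [core_abs _ ht.1.le, abs_of_nonneg (by positivity : (0:ℝ) ≤ (Real.sqrt π)⁻¹)]
    rw [setIntegral_congr_fun measurableSet_Ioc h1, MeasureTheory.integral_const_mul,
      ← intervalIntegral.integral_of_le hξ.le]
    have habs : (0:ℝ) < |y + 2 * (n:ℝ)| := abs_pos.mpr (hA n)
    have hb := core_integral_le habs hξ
    rw [sq_abs] at hb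
    calc (Real.sqrt π)⁻¹ * ∫ t in (0:ℝ)..ξ, core |y + 2 * (n:ℝ)| t
        ≤ (Real.sqrt π)⁻¹ * (Real.sqrt 2 * Real.sqrt π *
            Real.exp (-(y + 2 * (n:ℝ)) ^ 2 / (8 * ξ))) :=
          mul_le_mul_of_nonneg_left hb (by positivity)
      _ = Real.sqrt 2 * Real.exp (-(y + 2 * (n:ℝ)) ^ 2 / (8 * ξ)) := by
          field_simp
  -- summability of the bounds
  have hB1 : Summable (fun n : ℕ =>
      Real.sqrt 2 * Real.exp (-(y + 2 * ((n:ℤ):ℝ)) ^ 2 / (8 * ξ))) := by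
    apply summable_gauss_aux hξ
    intro n
    push_cast
    rw [abs_of_pos (by positivity)]
    have : (0:ℝ) ≤ n := Nat.cast_nonneg n
    linarith
  have hB2 : Summable (fun n : ℕ =>
      Real.sqrt 2 * Real.exp (-(y + 2 * ((((-((n:ℤ) + 1)) : ℤ)):ℝ)) ^ 2 / (8 * ξ))) := by
    apply summable_gauss_aux hξ
    intro n
    push_cast
    have h0 : (0:ℝ) ≤ n := Nat.cast_nonneg n
    rw [abs_of_neg (by linarith)]
    linarith
  have hBZ : Summable (fun n : ℤ =>
      Real.sqrt 2 * Real.exp (-(y + 2 * (n:ℝ)) ^ 2 / (8 * ξ))) :=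
    Summable.of_nat_of_neg_add_one hB1 hB2
  have hnormsum : Summable (fun n : ℤ => ∫ t in Ioc (0:ℝ) ξ, ‖g n t‖) :=
    Summable.of_nonneg_of_le
      (fun n => integral_nonneg fun t => norm_nonneg _) hnormval hBZ
  rw [← integral_tsum_of_summable_integral_norm hint hnormsum]
  -- summability of the term-integrals, ℕ-indexed parts
  have hJ1 : Summable (fun n : ℕ => ∫ t in Ioc (0:ℝ) ξ, g ((n:ℤ)) t) := by
    apply Summable.of_norm_bounded hB1
    intro n
    exact (MeasureTheory.norm_integral_le_integral_norm _).trans (hnormval (n:ℤ))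
  have hJ2 : Summable (fun n : ℕ => ∫ t in Ioc (0:ℝ) ξ, g (-((n:ℤ) + 1)) t) := by
    apply Summable.of_norm_bounded hB2
    intro n
    exact (MeasureTheory.norm_integral_le_integral_norm _).trans (hnormval (-((n:ℤ) + 1)))
  rw [tsum_of_nat_of_neg_add_one hJ1 hJ2, ← Summable.tsum_add hJ1 hJ2, ← tsum_mul_left]
  -- evaluate each pair
  apply tsum_congr
  intro n
  have hn0 : (0:ℝ) ≤ n := Nat.cast_nonneg n
  have hval1 : ∫ t in Ioc (0:ℝ) ξ, g ((n:ℤ)) t =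
      (Real.sqrt π)⁻¹ * (Real.sqrt π - 2 * phi ((y + 2 * (n:ℝ)) / (2 * Real.sqrt ξ))) := by
    simp only [hg, Int.cast_natCast]
    rw [MeasureTheory.integral_const_mul, ← intervalIntegral.integral_of_le hξ.le,
      core_integral (by linarith) hξ]
  have hval2 : ∫ t in Ioc (0:ℝ) ξ, g (-((n:ℤ) + 1)) t =
      (Real.sqrt π)⁻¹ * (-Real.sqrt π - 2 * phi ((y + 2 * (-((n:ℝ)) - 1)) / (2 * Real.sqrt ξ))) := by
    simp only [hg, Int.cast_neg, Int.cast_add, Int.cast_natCast, Int.cast_one]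
    rw [MeasureTheory.integral_const_mul, ← intervalIntegral.integral_of_le hξ.le]
    rw [show (y + 2 * (-((n:ℝ)) - 1)) = y + 2 * (-((n:ℝ) + 1)) by ring]
    rw [core_integral_neg (by linarith) hξ]
  rw [hval1, hval2]
  rw [show (y + 2 * (-((n:ℝ)) - 1)) / (2 * Real.sqrt ξ)
      = -((2 * (n:ℝ) + 2 - y) / (2 * Real.sqrt ξ)) by ring, phi_neg]
  rw [← phi_sub]
  field_simp
  ring
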